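/- Let G and H be finite groups and let (X,Y) be an orthogonal pair of finite bifree (G,H)-bisets. Then there exists a group isomorphism φ : H → G such that |X^{Δ(G,φ,H)}| ≠ |Y^{Δ(G,φ,H)}|, and φ is unique up to composition with inner automorphisms of G: if ψ : H → G is another isomorphism with |X^{Δ(G,ψ,H)}| ≠ |Y^{Δ(G,ψ,H)}|, then ψ = c_g∘φ for some g ∈ G. -/

import Mathlib

open MulAction

/-- An isomorphism of `M`-sets: an equivariant bijection. -/
def IsoAsGSets (M X Y : Type*) [SMul M X] [SMul M Y] : Prop :=
  ∃ e : X ≃ Y, ∀ (m : M) (x : X), e (m • x) = m • e x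

/-- The twisted diagonal subgroup `Δ(R,α,S) = {(α s, s) | s ∈ S}` of `G × H`,
for an isomorphism `α : S ≃* R`. -/
def twistedDiagonal {G H : Type*} [Group G] [Group H] (R : Subgroup G) (S : Subgroup H)
    (α : S ≃* R) : Subgroup (G × H) :=
  ((R.subtype.comp α.toMonoidHom).prod S.subtype).range

/-- `Δ(G,φ,H) = {(φ h, h) | h ∈ H} ≤ G × H` for an isomorphism `φ : H ≃* G`. -/
def fullTwistedDiagonal {G H : Type*} [Group G] [Group H] (φ : H ≃* G) : Subgroup (G × H) :=
  (φ.toMonoidHom.prod (MonoidHom.id H)).range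

/-- The diagonal subgroup `Δ(R) = {(r,r) | r ∈ R} ≤ G × G`. -/
def diagSubgroup {G : Type*} [Group G] (R : Subgroup G) : Subgroup (G × G) :=
  (R.subtype.prod R.subtype).range

/-- A `(G,H)`-biset (i.e. a left `(G × H)`-set) is bifree if it is free as a left `G`-set
and free as a right `H`-set. -/
def IsBifree (G H X : Type*) [Group G] [Group H] [MulAction (G × H) X] : Prop :=
  (∀ (g : G) (x : X), (g, (1 : H)) • x = x → g = 1) ∧
  (∀ (h : H) (x : X), ((1 : G), h) • x = x → h = 1)

section Tensor

variable (G H K : Type*) [Group G] [Group H] [Group K]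
variable (X Y : Type*) [MulAction (G × H) X] [MulAction (H × K) Y]

/-- The relation on `X × Y` identifying `(x·h, y)` with `(x, h·y)`. -/
def bisetSetoid : Setoid (X × Y) where
  r p q := ∃ h : H, q.1 = ((1 : G), h) • p.1 ∧ q.2 = (h, (1 : K)) • p.2
  iseqv := by
    constructor
    · intro p
      exact ⟨1, by simp [Prod.mk_one_one], by simp [Prod.mk_one_one]⟩
    · rintro p q ⟨h, h1, h2⟩
      exact ⟨h⁻¹, by simp [h1, smul_smul, Prod.mk_one_one], by simp [h2, smul_smul, Prod.mk_one_one]⟩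
    · rintro p q r ⟨h, h1, h2⟩ ⟨h', h1', h2'⟩
      exact ⟨h' * h, by simp [h1, h1', smul_smul], by simp [h2, h2', smul_smul]⟩

/-- The tensor product `X ×_H Y` of a `(G,H)`-biset and an `(H,K)`-biset;
a `(G,K)`-biset. -/
def BisetTensor : Type _ :=
  Quotient (bisetSetoid G H K X Y)

variable {G H K X Y}

/-- The class of `(x, y)` in `X ×_H Y`. -/
def BisetTensor.mk (p : X × Y) : BisetTensor G H K X Y :=
  Quotient.mk (bisetSetoid G H K X Y) p

variable (G H K X Y)

instance : SMul (G × K) (BisetTensor G H K X Y) :=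
  ⟨fun a => Quotient.map (fun p => ((a.1, (1 : H)) • p.1, ((1 : H), a.2) • p.2))
    (by
      rintro p q ⟨h, h1, h2⟩
      exact ⟨h, by simp [h1, smul_smul], by simp [h2, smul_smul]⟩)⟩

variable {G H K X Y}

theorem BisetTensor.smul_mk (a : G × K) (p : X × Y) :
    a • (BisetTensor.mk p : BisetTensor G H K X Y) =
      BisetTensor.mk ((a.1, (1 : H)) • p.1, ((1 : H), a.2) • p.2) :=
  rfl

variable (G H K X Y)

instance : MulAction (G × K) (BisetTensor G H K X Y) where
  one_smul q := Quotient.inductionOn q fun p => by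
    refine Quotient.sound ⟨1, ?_, ?_⟩ <;> simp [Prod.mk_one_one]
  mul_smul a b q := Quotient.inductionOn q fun p => by
    refine Quotient.sound ⟨1, ?_, ?_⟩ <;> simp [smul_smul, Prod.mk_one_one]

end Tensor

section Op

/-- The opposite biset: a `(G,H)`-biset viewed as an `(H,G)`-biset via
`h · x · g := g⁻¹ · x · h⁻¹`. -/
def BisetOp (H G X : Type*) : Type _ := (fun _ _ => X) H G

instance BisetOp.instMulAction {G H : Type*} [Group G] [Group H] (X : Type*)
    [MulAction (G × H) X] : MulAction (H × G) (BisetOp H G X) :=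
  MulAction.compHom X (MulEquiv.prodComm : H × G ≃* G × H).toMonoidHom

instance BisetOp.instFinite {G H : Type*} (X : Type*) [Finite X] : Finite (BisetOp H G X) :=
  inferInstanceAs (Finite X)

end Op

section Grp

/-- The group `G` viewed as a `(G,G)`-biset via left and right multiplication. -/
structure BisetGrp (G : Type*) where
  /-- the underlying group element -/
  val : G

instance BisetGrp.instSMul {G : Type*} [Group G] : SMul (G × G) (BisetGrp G) :=
  ⟨fun p x => ⟨p.1 * x.val * p.2⁻¹⟩⟩

theorem BisetGrp.smul_def {G : Type*} [Group G] (p : G × G) (x : BisetGrp G) :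
    p • x = ⟨p.1 * x.val * p.2⁻¹⟩ := rfl

instance BisetGrp.instMulAction {G : Type*} [Group G] : MulAction (G × G) (BisetGrp G) where
  one_smul x := by
    cases x
    simp [BisetGrp.smul_def]
  mul_smul p q x := by
    cases x
    simp [BisetGrp.smul_def, mul_assoc]

instance BisetGrp.instFinite {G : Type*} [Finite G] : Finite (BisetGrp G) :=
  Finite.of_equiv G ⟨fun g => ⟨g⟩, fun x => x.val, fun _ => rfl, fun _ => rfl⟩

end Grp

/-- A pair `(X,Y)` of `(G,H)`-bisets is an orthogonal pair if
`(X ×_H X°) ⊔ (Y ×_H Y°) ≅ G ⊔ (X ×_H Y°) ⊔ (Y ×_H X°)` as `(G,G)`-bisets;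
this encodes the equation `([X] - [Y]) ·_H ([X] - [Y])° = [G]` in `B^Δ(G,G)`. -/
def IsOrthogonalPair (G H : Type*) [Group G] [Group H] (X Y : Type*)
    [MulAction (G × H) X] [MulAction (G × H) Y] : Prop :=
  IsoAsGSets (G × G)
    (BisetTensor G H G X (BisetOp H G X) ⊕ BisetTensor G H G Y (BisetOp H G Y))
    (BisetGrp G ⊕ (BisetTensor G H G X (BisetOp H G Y) ⊕ BisetTensor G H G Y (BisetOp H G X)))

section Iota

/-- For a `G`-set `Z`, the `(G,G)`-biset `ι(Z) = G × Z` with action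
`(g₁,g₂) • (g,z) = (g₁ g g₂⁻¹, g₂ • z)`. -/
structure IotaBiset (G Z : Type*) where
  /-- the group component -/
  fst : G
  /-- the `G`-set component -/
  snd : Z

instance IotaBiset.instSMul {G Z : Type*} [Group G] [MulAction G Z] :
    SMul (G × G) (IotaBiset G Z) :=
  ⟨fun p x => ⟨p.1 * x.fst * p.2⁻¹, p.2 • x.snd⟩⟩

theorem IotaBiset.smul_def {G Z : Type*} [Group G] [MulAction G Z] (p : G × G)
    (x : IotaBiset G Z) : p • x = ⟨p.1 * x.fst * p.2⁻¹, p.2 • x.snd⟩ := rfl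

instance IotaBiset.instMulAction {G Z : Type*} [Group G] [MulAction G Z] :
    MulAction (G × G) (IotaBiset G Z) where
  one_smul x := by
    cases x
    simp [IotaBiset.smul_def]
  mul_smul p q x := by
    cases x
    simp [IotaBiset.smul_def, mul_assoc, mul_smul]

instance IotaBiset.instFinite {G Z : Type*} [Finite G] [Finite Z] : Finite (IotaBiset G Z) :=
  Finite.of_equiv (G × Z) ⟨fun p => ⟨p.1, p.2⟩, fun x => (x.fst, x.snd), fun _ => rfl,
    fun _ => rfl⟩

end Iota

open MulAction

section Counting

lemma my_card_sigma {ι : Type*} [Fintype ι] (f : ι → Type*) [∀ i, Finite (f i)] :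
    Nat.card (Σ i, f i) = ∑ i, Nat.card (f i) := by
  letI : ∀ i, Fintype (f i) := fun i => Fintype.ofFinite _
  simp [Nat.card_eq_fintype_card, Fintype.card_sigma]

set_option maxHeartbeats 1000000 in
lemma card_free_aux {K W T : Type*} [Group K] [MulAction K W]
    (hfree : ∀ (k : K) (w : W), k • w = w → k = 1)
    (q : W → T) (hq : ∀ p p', q p = q p' ↔ ∃ k : K, p' = k • p)
    (hsurj : Function.Surjective q) :
    Nat.card W = Nat.card T * Nat.card K := by
  have hstab : ∀ w : W, stabilizer K w = ⊥ := by
    intro w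
    ext k
    simp only [mem_stabilizer_iff, Subgroup.mem_bot]
    exact ⟨fun h => hfree k w h, fun h => by simp [h]⟩
  have e1 : W ≃ Σ ω : Quotient (orbitRel K W), K ⧸ stabilizer K ω.out :=
    selfEquivSigmaOrbitsQuotientStabilizer K W
  have e2 : ∀ w : W, (K ⧸ stabilizer K w) ≃ K := fun w => by
    refine (Equiv.ofBijective (QuotientGroup.mk (s := stabilizer K w)) ⟨?_, ?_⟩).symm
    · intro a b hab
      have h2 : a⁻¹ * b ∈ stabilizer K w := QuotientGroup.eq.mp hab
      rw [hstab w, Subgroup.mem_bot] at h2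
      exact inv_mul_eq_one.mp h2
    · exact QuotientGroup.mk_surjective
  have e3 : W ≃ Quotient (orbitRel K W) × K :=
    e1.trans ((Equiv.sigmaCongrRight
      (β₁ := fun ω : Quotient (orbitRel K W) => K ⧸ stabilizer K ω.out)
      (β₂ := fun _ => K) fun ω => e2 ω.out).trans (Equiv.sigmaEquivProd _ K))
  have e4 : Quotient (orbitRel K W) ≃ T := by
    refine Equiv.ofBijective (Quotient.lift q ?_) ⟨?_, ?_⟩
    · intro a b hab
      obtain ⟨k, hk⟩ := hab
      exact ((hq b a).2 ⟨k, (show k • b = a from hk).symm⟩).symm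
    · intro a b
      induction a using Quotient.inductionOn with | h a =>
      induction b using Quotient.inductionOn with | h b =>
      intro hab
      obtain ⟨k, hk⟩ := (hq a b).1 hab
      refine Quotient.sound ⟨k⁻¹, ?_⟩
      show k⁻¹ • b = a
      rw [hk, ← mul_smul, inv_mul_cancel, one_smul]
    · intro t
      obtain ⟨w, hw⟩ := hsurj t
      exact ⟨Quotient.mk _ w, hw⟩
  calc Nat.card W = Nat.card (Quotient (orbitRel K W) × K) := Nat.card_congr e3
    _ = Nat.card (Quotient (orbitRel K W)) * Nat.card K := Nat.card_prod _ _
    _ = Nat.card T * Nat.card K := by rw [Nat.card_congr e4]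

lemma card_free_raw {K W T : Type*} [Group K] (act : K → W → W)
    (h1 : ∀ w, act 1 w = w) (hmul : ∀ a b w, act (a * b) w = act a (act b w))
    (hfree : ∀ k w, act k w = w → k = 1)
    (q : W → T) (hq : ∀ p p', q p = q p' ↔ ∃ k, p' = act k p)
    (hsurj : Function.Surjective q) :
    Nat.card W = Nat.card T * Nat.card K := by
  letI : MulAction K W := { smul := act, one_smul := h1, mul_smul := hmul }
  exact card_free_aux hfree q hq hsurj

lemma dvd_card_free_raw {K W : Type*} [Group K] (act : K → W → W)
    (h1 : ∀ w, act 1 w = w) (hmul : ∀ a b w, act (a * b) w = act a (act b w))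
    (hfree : ∀ k w, act k w = w → k = 1) :
    Nat.card K ∣ Nat.card W := by
  letI : MulAction K W := { smul := act, one_smul := h1, mul_smul := hmul }
  have hstab : ∀ (k : K) (w : W), k • w = w → k = 1 := hfree
  refine Dvd.intro (Nat.card (Quotient (orbitRel K W))) ?_
  rw [mul_comm]
  exact (card_free_aux hstab (Quotient.mk (orbitRel K W))
    (fun p p' => by
      rw [Quotient.eq]
      constructor
      · rintro ⟨k, hk⟩
        refine ⟨k⁻¹, ?_⟩
        show p' = k⁻¹ • p
        rw [← hk]
        show p' = k⁻¹ • k • p'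
        rw [← mul_smul, inv_mul_cancel, one_smul]
      · rintro ⟨k, hk⟩
        refine ⟨k⁻¹, ?_⟩
        show k⁻¹ • p' = p
        rw [hk]
        show k⁻¹ • k • p = p
        rw [← mul_smul, inv_mul_cancel, one_smul])
    (Quotient.exists_rep ·)).symm

section Helpers

variable {G H : Type*} [Group G] [Group H]

lemma mem_ftd_iff {φ : H ≃* G} {a : G × H} :
    a ∈ fullTwistedDiagonal φ ↔ ∃ h : H, ((φ h, h) : G × H) = a := by
  simp [fullTwistedDiagonal, MonoidHom.mem_range, Prod.ext_iff]

lemma mem_fix_ftd {U : Type*} [MulAction (G × H) U] {φ : H ≃* G} {u : U} :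
    u ∈ MulAction.fixedPoints (fullTwistedDiagonal φ) U ↔
      ∀ h : H, ((φ h, h) : G × H) • u = u := by
  constructor
  · intro hu h
    exact hu ⟨(φ h, h), mem_ftd_iff.2 ⟨h, rfl⟩⟩
  · intro hu s
    obtain ⟨h, hh⟩ := mem_ftd_iff.1 s.2
    show (s : G × H) • u = u
    rw [← hh]
    exact hu h

lemma mem_diag_top {g : G} : ((g, g) : G × G) ∈ diagSubgroup (⊤ : Subgroup G) :=
  ⟨⟨g, trivial⟩, rfl⟩

lemma mem_diag_iff {a : G × G} :
    a ∈ diagSubgroup (⊤ : Subgroup G) ↔ ∃ g : G, ((g, g) : G × G) = a := by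
  simp [diagSubgroup, MonoidHom.mem_range, Prod.ext_iff, Subtype.exists]

lemma fix_diag_iff {A : Type*} [MulAction (G × G) A] {a : A} :
    a ∈ MulAction.fixedPoints (diagSubgroup (⊤ : Subgroup G)) A ↔
      ∀ g : G, ((g, g) : G × G) • a = a := by
  constructor
  · intro ha g
    exact ha ⟨(g, g), mem_diag_top⟩
  · intro ha s
    obtain ⟨g, hg⟩ := mem_diag_iff.1 s.2
    show (s : G × G) • a = a
    rw [← hg]
    exact ha g

/-- fixed points of a disjoint union. -/
lemma card_fix_sum {A B : Type*} [MulAction (G × G) A] [MulAction (G × G) B]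
    [Finite A] [Finite B] (S : Subgroup (G × G)) :
    Nat.card (MulAction.fixedPoints S (A ⊕ B)) =
      Nat.card (MulAction.fixedPoints S A) + Nat.card (MulAction.fixedPoints S B) := by
  rw [← Nat.card_sum]
  apply Nat.card_congr
  apply Equiv.symm
  refine Equiv.ofBijective (fun x => Sum.casesOn x
    (fun a => ⟨Sum.inl a.1, fun s => by
      have := a.2 s
      show (s : G × G) • (Sum.inl a.1 : A ⊕ B) = Sum.inl a.1
      show Sum.inl ((s : G × G) • a.1) = Sum.inl a.1
      rw [show (s : G × G) • a.1 = a.1 from this]⟩)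
    (fun b => ⟨Sum.inr b.1, fun s => by
      have := b.2 s
      show (s : G × G) • (Sum.inr b.1 : A ⊕ B) = Sum.inr b.1
      show Sum.inr ((s : G × G) • b.1) = Sum.inr b.1
      rw [show (s : G × G) • b.1 = b.1 from this]⟩)) ⟨?_, ?_⟩
  · rintro (a | a) (b | b) hab <;> simp only [Subtype.mk.injEq, Sum.inl.injEq, Sum.inr.injEq] at hab
    · exact congrArg Sum.inl (Subtype.ext (Sum.inl.inj (congrArg Subtype.val hab)))
    · exact absurd (congrArg Subtype.val hab) Sum.inl_ne_inr
    · exact absurd (congrArg Subtype.val hab) Sum.inr_ne_inl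
    · exact congrArg Sum.inr (Subtype.ext (Sum.inr.inj (congrArg Subtype.val hab)))
  · rintro ⟨(a | b), hx⟩
    · refine ⟨Sum.inl ⟨a, fun s => ?_⟩, rfl⟩
      have := hx s
      show (s : G × G) • a = a
      have h2 : (Sum.inl ((s : G × G) • a) : A ⊕ B) = Sum.inl a := hx s
      exact Sum.inl.inj h2
    · refine ⟨Sum.inr ⟨b, fun s => ?_⟩, rfl⟩
      have h2 : (Sum.inr ((s : G × G) • b) : A ⊕ B) = Sum.inr b := hx s
      exact Sum.inr.inj h2

/-- transfer of fixed point counts along an equivariant bijection. -/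
lemma card_fix_congr {A B : Type*} [MulAction (G × G) A] [MulAction (G × G) B]
    (h : IsoAsGSets (G × G) A B) (S : Subgroup (G × G)) :
    Nat.card (MulAction.fixedPoints S A) = Nat.card (MulAction.fixedPoints S B) := by
  obtain ⟨e, he⟩ := h
  apply Nat.card_congr
  refine e.subtypeEquiv fun a => ?_
  constructor
  · intro ha s
    show (s : G × G) • e a = e a
    rw [← he (s : G × G) a, show (s : G × G) • a = a from ha s]
  · intro ha s
    show (s : G × G) • a = a
    apply e.injective
    rw [he (s : G × G) a]
    exact ha s

/-- the fixed points of the diagonal on the group biset are the center. -/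
lemma card_fix_grp :
    Nat.card (MulAction.fixedPoints (diagSubgroup (⊤ : Subgroup G)) (BisetGrp G)) =
      Nat.card (Subgroup.center G) := by
  apply Nat.card_congr
  refine ⟨fun x => ⟨x.1.val, Subgroup.mem_center_iff.2 fun g => ?_⟩,
    fun z => ⟨⟨z.1⟩, fix_diag_iff.2 fun g => ?_⟩, fun x => Subtype.ext rfl, fun z => Subtype.ext rfl⟩
  · have := fix_diag_iff.1 x.2 g
    rw [BisetGrp.smul_def] at this
    have h2 : g * x.1.val * g⁻¹ = x.1.val := congrArg BisetGrp.val this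
    calc g * x.1.val = g * x.1.val * g⁻¹ * g := by group
    _ = x.1.val * g := by rw [h2]
  · rw [BisetGrp.smul_def]
    have := (Subgroup.mem_center_iff.1 z.2 g⁻¹).symm
    congr 1
    calc g * z.1 * g⁻¹ = g * (z.1 * g⁻¹) := by rw [mul_assoc]
    _ = g * (g⁻¹ * z.1) := by rw [Subgroup.mem_center_iff.1 z.2 g⁻¹]
    _ = z.1 := by group

lemma card_bisetGrp : Nat.card (BisetGrp G) = Nat.card G :=
  Nat.card_congr ⟨fun x => x.val, fun g => ⟨g⟩, fun _ => rfl, fun _ => rfl⟩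

end Helpers

section TensorCount

variable {G H : Type*} [Group G] [Group H]
variable {U V : Type*} [MulAction (G × H) U] [MulAction (G × H) V]

/-- cardinality of the tensor product over `H` of bifree bisets. -/
lemma card_tensor (hUr : ∀ (h : H) (u : U), ((1 : G), h) • u = u → h = 1) :
    Nat.card U * Nat.card V =
      Nat.card (BisetTensor G H G U (BisetOp H G V)) * Nat.card H := by
  have := card_free_raw (K := H) (W := U × BisetOp H G V)
    (T := BisetTensor G H G U (BisetOp H G V))
    (fun h p => (((1 : G), h) • p.1,
      show BisetOp H G V from (((1 : G), h) : G × H) • (show V from p.2)))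
    (fun p => by
      show ((((1:G),(1:H)) : G × H) • p.1, show BisetOp H G V from (((1:G),(1:H)) : G × H) • (show V from p.2)) = p
      cases p
      simp only [Prod.mk_one_one]
      exact Prod.ext (one_smul _ _) (one_smul (G × H) (_ : V)))
    (fun a b p => by
      show ((((1:G), a*b) : G × H) • p.1, show BisetOp H G V from (((1:G),a*b) : G × H) • (show V from p.2)) = _
      cases p
      refine Prod.ext ?_ ?_
      · show (((1:G), a*b) : G × H) • _ = (((1:G), a) : G × H) • (((1:G), b) : G × H) • _
        rw [← mul_smul]
        congr 1
        simp
      · show (((1:G), a*b) : G × H) • _ = (((1:G), a) : G × H) • (((1:G), b) : G × H) • (_ : V)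
        rw [← mul_smul]
        congr 1
        simp)
    (fun h p hp => hUr h p.1 (congrArg Prod.fst hp))
    (fun p => BisetTensor.mk p)
    (fun p p' => by
      constructor
      · intro hpq
        obtain ⟨h, h1, h2⟩ := Quotient.exact hpq
        exact ⟨h, Prod.ext h1 h2⟩
      · rintro ⟨h, rfl⟩
        refine Quotient.sound ⟨h, rfl, rfl⟩)
    (fun t => Quotient.exists_rep t)
  exact (by
    calc Nat.card U * Nat.card V = Nat.card (U × BisetOp H G V) := (Nat.card_prod _ _).symm
    _ = _ := this)

/-- The set of "doubly diagonal" pairs. -/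
def Pset (G H : Type*) [Group G] [Group H] (U V : Type*)
    [MulAction (G × H) U] [MulAction (G × H) V] : Type _ :=
  {p : U × V // ∀ g : G, ∃ h : H,
    ((g, h) : G × H) • p.1 = p.1 ∧ ((g, h) : G × H) • p.2 = p.2}

instance Pset.instFinite [Finite U] [Finite V] : Finite (Pset G H U V) :=
  inferInstanceAs (Finite {p : U × V // ∀ g : G, ∃ h : H,
    ((g, h) : G × H) • p.1 = p.1 ∧ ((g, h) : G × H) • p.2 = p.2})

/-- the key count: pairs over fixed points of the diagonal on the tensor. -/
lemma card_pset (hUr : ∀ (h : H) (u : U), ((1 : G), h) • u = u → h = 1) :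
    Nat.card (Pset G H U V) =
      Nat.card (MulAction.fixedPoints (diagSubgroup (⊤ : Subgroup G))
        (BisetTensor G H G U (BisetOp H G V))) * Nat.card H := by
  classical
  set Δ := diagSubgroup (⊤ : Subgroup G) with hΔ
  set T := BisetTensor G H G U (BisetOp H G V) with hT
  -- the free H-action on Pset
  have act_mem : ∀ (h : H) (p : Pset G H U V), ∀ g : G, ∃ h' : H,
      ((g, h') : G × H) • (((1 : G), h) • p.1.1) = ((1 : G), h) • p.1.1 ∧
      ((g, h') : G × H) • (((1 : G), h) • p.1.2) = ((1 : G), h) • p.1.2 := by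
    intro h p g
    obtain ⟨h₀, h1, h2⟩ := p.2 g
    refine ⟨h * h₀ * h⁻¹, ?_, ?_⟩
    · calc ((g, h * h₀ * h⁻¹) : G × H) • ((1 : G), h) • p.1.1
          = (((g, h * h₀ * h⁻¹) * ((1 : G), h) : G × H)) • p.1.1 := (mul_smul _ _ _).symm
        _ = (((1 : G), h) * ((g, h₀) : G × H)) • p.1.1 := by
            congr 1
            simp [Prod.ext_iff, mul_assoc]
        _ = ((1 : G), h) • p.1.1 := by rw [mul_smul, h1]
    · calc ((g, h * h₀ * h⁻¹) : G × H) • ((1 : G), h) • p.1.2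
          = (((g, h * h₀ * h⁻¹) * ((1 : G), h) : G × H)) • p.1.2 := (mul_smul _ _ _).symm
        _ = (((1 : G), h) * ((g, h₀) : G × H)) • p.1.2 := by
            congr 1
            simp [Prod.ext_iff, mul_assoc]
        _ = ((1 : G), h) • p.1.2 := by rw [mul_smul, h2]
  refine card_free_raw (K := H) (W := Pset G H U V)
    (fun h p => ⟨(((1 : G), h) • p.1.1, ((1 : G), h) • p.1.2), act_mem h p⟩)
    (fun p => Subtype.ext (by simp [Prod.mk_one_one]))
    (fun a b p => Subtype.ext (by
      refine Prod.ext ?_ ?_ <;>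
      · show (((1:G), a * b) : G × H) • _ = (((1:G), a) : G × H) • (((1:G), b) : G × H) • _
        rw [← mul_smul]
        congr 1
        simp))
    (fun h p hp => hUr h p.1.1 (congrArg (Prod.fst ∘ Subtype.val) hp))
    (fun p => ⟨BisetTensor.mk (p.1.1, show BisetOp H G V from p.1.2), ?_⟩)
    ?_ ?_
  · -- fixedness of the image
    rw [fix_diag_iff]
    intro g
    obtain ⟨h₀, h1, h2⟩ := p.2 g
    rw [BisetTensor.smul_mk]
    refine Quotient.sound ⟨h₀, ?_, ?_⟩
    · show p.1.1 = (((1:G), h₀) : G × H) • ((g, (1:H)) : G × H) • p.1.1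
      rw [← mul_smul]
      rw [show (((1:G), h₀) : G × H) * ((g, (1:H)) : G × H) = ((g, h₀) : G × H) by
        simp [Prod.ext_iff]]
      exact h1.symm
    · show p.1.2 = (((1:G), h₀) : G × H) • ((g, (1:H)) : G × H) • (p.1.2 : V)
      rw [← mul_smul]
      rw [show (((1:G), h₀) : G × H) * ((g, (1:H)) : G × H) = ((g, h₀) : G × H) by
        simp [Prod.ext_iff]]
      exact h2.symm
  · -- fibers of q
    intro p p'
    rw [Subtype.ext_iff]
    constructor
    · intro hpq
      obtain ⟨h, h1, h2⟩ := Quotient.exact hpq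
      refine ⟨h, Subtype.ext (Prod.ext h1 h2)⟩
    · rintro ⟨h, rfl⟩
      exact Quotient.sound ⟨h, rfl, rfl⟩
  · -- surjectivity
    rintro ⟨t, ht⟩
    obtain ⟨⟨u, v⟩, hrep⟩ := Quotient.exists_rep t
    have hP : ∀ g : G, ∃ h : H,
        ((g, h) : G × H) • u = u ∧ ((g, h) : G × H) • (show V from v) = (show V from v) := by
      intro g
      have hfix := fix_diag_iff.1 ht g
      rw [← hrep] at hfix
      have hfix' : (BisetTensor.mk (((g, (1:H)) : G × H) • u,
          (((1:H), g) : H × G) • v) : BisetTensor G H G U (BisetOp H G V)) =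
          BisetTensor.mk (u, v) := hfix
      obtain ⟨h, h1, h2⟩ := Quotient.exact hfix'
      refine ⟨h, ?_, ?_⟩
      · show (((g, h) : G × H)) • u = u
        rw [show ((g, h) : G × H) = (((1:G), h) : G × H) * ((g, (1:H)) : G × H) by
          simp [Prod.ext_iff], mul_smul]
        exact h1.symm
      · show (((g, h) : G × H)) • (show V from v) = (show V from v)
        rw [show ((g, h) : G × H) = (((1:G), h) : G × H) * ((g, (1:H)) : G × H) by
          simp [Prod.ext_iff], mul_smul]
        exact (show (show V from v) = (((1:G), h) : G × H) • ((g, (1:H)) : G × H) • (show V from v)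
          from h2).symm
    exact ⟨⟨(u, show V from v), hP⟩, Subtype.ext hrep⟩

end TensorCount

section Sigma

variable {G H : Type*} [Group G] [Group H]
variable {U V : Type*} [MulAction (G × H) U] [MulAction (G × H) V]

lemma ftd_unique {φ ψ : H ≃* G} {u : U}
    (hfree : ∀ (g : G) (u : U), ((g, (1 : H)) : G × H) • u = u → g = 1)
    (hφ : ∀ h : H, ((φ h, h) : G × H) • u = u) (hψ : ∀ h : H, ((ψ h, h) : G × H) • u = u) :
    φ = ψ := by
  refine MulEquiv.ext fun h => ?_
  have h1 := hφ h
  have h2 := hψ h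
  have h3 : ((φ h * (ψ h)⁻¹, (1 : H)) : G × H) • u = u := by
    have : ((φ h, h) : G × H) • u = ((ψ h, h) : G × H) • u := by rw [h1, h2]
    have h4 := congrArg (fun w => (((ψ h, h) : G × H))⁻¹ • w) this
    simp only [← mul_smul] at h4
    rw [show (((ψ h, h) : G × H))⁻¹ * ((φ h, h) : G × H) = (((ψ h)⁻¹ * φ h, (1:H)) : G × H) by
      simp [Prod.ext_iff], show (((ψ h, h) : G × H))⁻¹ * ((ψ h, h) : G × H) = 1 by simp,
      one_smul] at h4
    have h5 : (ψ h)⁻¹ * φ h = 1 := hfree _ _ h4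
    rw [show φ h * (ψ h)⁻¹ = 1 by
      have := congrArg (fun a => ψ h * a * (ψ h)⁻¹) h5
      simpa [mul_assoc] using this]
    simp [Prod.mk_one_one]
  have h6 := hfree _ _ h3
  have : φ h = ψ h := by
    have := congrArg (· * ψ h) h6
    simpa [mul_assoc] using this
  exact this

lemma card_pset_eq_sum [Finite G] [Finite H] [Finite U] [Finite V]
    (hGH : Nat.card G = Nat.card H)
    (hU : IsBifree G H U) (hV : IsBifree G H V) :
    Nat.card (Pset G H U V) = Nat.card (Σ φ : H ≃* G,
      (MulAction.fixedPoints (fullTwistedDiagonal φ) U ×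
        MulAction.fixedPoints (fullTwistedDiagonal φ) V)) := by
  have key : Pset G H U V ≃ Σ φ : H ≃* G,
      (MulAction.fixedPoints (fullTwistedDiagonal φ) U ×
        MulAction.fixedPoints (fullTwistedDiagonal φ) V) := by
    refine (Equiv.ofBijective (fun x : Σ φ : H ≃* G,
      (MulAction.fixedPoints (fullTwistedDiagonal φ) U ×
        MulAction.fixedPoints (fullTwistedDiagonal φ) V) =>
      (⟨(x.2.1.1, x.2.2.1), fun g => ⟨x.1.symm g, ?_, ?_⟩⟩ : Pset G H U V)) ⟨?_, ?_⟩).symm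
    · have := mem_fix_ftd.1 x.2.1.2 (x.1.symm g)
      rwa [MulEquiv.apply_symm_apply] at this
    · have := mem_fix_ftd.1 x.2.2.2 (x.1.symm g)
      rwa [MulEquiv.apply_symm_apply] at this
    · -- injectivity
      rintro ⟨φ, xu, xv⟩ ⟨ψ, yu, yv⟩ hxy
      have h1 : xu.1 = yu.1 := congrArg (Prod.fst ∘ Subtype.val) hxy
      have h2 : xv.1 = yv.1 := congrArg (Prod.snd ∘ Subtype.val) hxy
      have hφψ : φ = ψ := by
        refine ftd_unique hU.1 (mem_fix_ftd.1 xu.2) ?_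
        rw [h1]
        exact mem_fix_ftd.1 yu.2
      subst hφψ
      have : (xu, xv) = (yu, yv) := Prod.ext (Subtype.ext h1) (Subtype.ext h2)
      rw [Sigma.mk.inj_iff]
      exact ⟨rfl, heq_of_eq this⟩
    · -- surjectivity: constructing the isomorphism
      rintro ⟨⟨u, v⟩, hp⟩
      have huniq : ∀ (g : G) (h h' : H), ((g, h) : G × H) • u = u →
          ((g, h') : G × H) • u = u → h = h' := by
        intro g h h' hh hh'
        have h4 := congrArg (fun w => (((g, h') : G × H))⁻¹ • w) (hh.trans hh'.symm)
        simp only [← mul_smul] at h4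
        rw [show (((g, h') : G × H))⁻¹ * ((g, h) : G × H) = (((1:G), h'⁻¹ * h) : G × H) by
          simp [Prod.ext_iff], show (((g, h') : G × H))⁻¹ * ((g, h') : G × H) = 1 by simp,
          one_smul] at h4
        have := hU.2 _ _ h4
        have := congrArg (h' * ·) this
        simpa [mul_assoc] using this
      set σ : G → H := fun g => (hp g).choose with hσ
      have σspec : ∀ g : G, ((g, σ g) : G × H) • u = u ∧ ((g, σ g) : G × H) • v = v :=
        fun g => (hp g).choose_spec
      have σmul : ∀ a b : G, σ (a * b) = σ a * σ b := by
        intro a b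
        refine huniq (a * b) _ _ (σspec (a * b)).1 ?_
        rw [show ((a * b, σ a * σ b) : G × H) = ((a, σ a) : G × H) * ((b, σ b) : G × H) from rfl,
          mul_smul, (σspec b).1, (σspec a).1]
      have σinj : Function.Injective σ := by
        have hinj : Function.Injective ⇑(MonoidHom.mk' σ σmul) := by
          rw [injective_iff_map_eq_one]
          intro g hg
          have : ((g, σ g) : G × H) • u = u := (σspec g).1
          rw [show σ g = 1 from hg] at this
          exact hU.1 _ _ this
        exact hinj
      have σbij : Function.Bijective σ :=
        (Nat.bijective_iff_injective_and_card σ).2 ⟨σinj, hGH⟩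
      set e : G ≃* H := MulEquiv.ofBijective (MonoidHom.mk' σ σmul) σbij with he
      refine ⟨⟨e.symm, ⟨u, mem_fix_ftd.2 fun h => ?_⟩, ⟨v, mem_fix_ftd.2 fun h => ?_⟩⟩,
        Subtype.ext rfl⟩
      · have : σ (e.symm h) = h := e.apply_symm_apply h
        have h2 := (σspec (e.symm h)).1
        rwa [this] at h2
      · have : σ (e.symm h) = h := e.apply_symm_apply h
        have h2 := (σspec (e.symm h)).2
        rwa [this] at h2
  exact Nat.card_congr key

end Sigma

section DvdConj

variable {G H : Type*} [Group G] [Group H]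
variable {U : Type*} [MulAction (G × H) U]

lemma card_H_dvd (hUr : ∀ (h : H) (u : U), ((1 : G), h) • u = u → h = 1) :
    Nat.card H ∣ Nat.card U := by
  refine dvd_card_free_raw (fun h u => (((1 : G), h) : G × H) • u) (by simp [Prod.mk_one_one])
    (fun a b u => by
      show (((1 : G), a * b) : G × H) • u = (((1 : G), a) : G × H) • (((1 : G), b) : G × H) • u
      rw [← mul_smul]; congr 1; simp [Prod.ext_iff]) hUr

lemma card_G_dvd (hUl : ∀ (g : G) (u : U), ((g, (1 : H)) : G × H) • u = u → g = 1) :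
    Nat.card G ∣ Nat.card U := by
  refine dvd_card_free_raw (fun g u => ((g, (1 : H)) : G × H) • u) (by simp [Prod.mk_one_one])
    (fun a b u => by
      show ((a * b, (1 : H)) : G × H) • u = ((a, (1 : H)) : G × H) • ((b, (1 : H)) : G × H) • u
      rw [← mul_smul]; congr 1; simp [Prod.ext_iff]) hUl

/-- the center acts freely on the set of `Δ(G,φ,H)`-fixed points. -/
lemma card_center_dvd_fix (hUl : ∀ (g : G) (u : U), ((g, (1 : H)) : G × H) • u = u → g = 1)
    (φ : H ≃* G) :
    Nat.card (Subgroup.center G) ∣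
      Nat.card (MulAction.fixedPoints (fullTwistedDiagonal φ) U) := by
  have inv : ∀ (z : Subgroup.center G)
      (x : MulAction.fixedPoints (fullTwistedDiagonal φ) U),
      (((z : G), (1 : H)) : G × H) • (x : U) ∈
        MulAction.fixedPoints (fullTwistedDiagonal φ) U := by
    intro z x
    rw [mem_fix_ftd]
    intro h
    rw [← mul_smul, show ((φ h, h) : G × H) * (((z : G), (1 : H)) : G × H) =
      (((z : G), (1 : H)) : G × H) * ((φ h, h) : G × H) by
        have := Subgroup.mem_center_iff.1 z.2 (φ h)
        simp only [Prod.mk_mul_mk, Prod.ext_iff, mul_one, one_mul]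
        exact ⟨this, trivial⟩, mul_smul,
      mem_fix_ftd.1 x.2 h]
  refine dvd_card_free_raw (K := ↥(Subgroup.center G))
    (fun z x => ⟨(((z : G), (1 : H)) : G × H) • (x : U), inv z x⟩)
    (fun x => Subtype.ext (by simp [Prod.mk_one_one]))
    (fun a b x => Subtype.ext (by
      show (((((a : G) * (b : G)), (1 : H)) : G × H)) • (x : U) = _
      rw [show ((((a : G) * (b : G)), (1 : H)) : G × H) =
        (((a : G), (1 : H)) : G × H) * (((b : G), (1 : H)) : G × H) by simp [Prod.ext_iff],
        mul_smul]))
    (fun z x hx => by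
      have : (((z : G), (1 : H)) : G × H) • (x : U) = (x : U) := congrArg Subtype.val hx
      exact Subtype.ext (hUl _ _ this))

/-- conjugated isomorphism. -/
def cAct (g : G) (φ : H ≃* G) : H ≃* G := φ.trans (MulAut.conj g)

lemma cAct_apply (g : G) (φ : H ≃* G) (h : H) : cAct g φ h = g * φ h * g⁻¹ := rfl

lemma cAct_cAct (a b : G) (φ : H ≃* G) : cAct a (cAct b φ) = cAct (a * b) φ := by
  refine MulEquiv.ext fun h => ?_
  simp [cAct_apply, mul_assoc]

lemma cAct_one (φ : H ≃* G) : cAct (1 : G) φ = φ := by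
  refine MulEquiv.ext fun h => ?_
  simp [cAct_apply]

lemma cAct_eq_self_iff (g : G) (φ : H ≃* G) : cAct g φ = φ ↔ g ∈ Subgroup.center G := by
  constructor
  · intro hc
    rw [Subgroup.mem_center_iff]
    intro b
    have := congrArg (fun ψ : H ≃* G => ψ (φ.symm b)) hc
    simp only [cAct_apply, MulEquiv.apply_symm_apply] at this
    calc b * g = g * b * g⁻¹ * g := by rw [this]
    _ = g * b := by group
  · intro hg
    refine MulEquiv.ext fun h => ?_
    rw [cAct_apply, ← Subgroup.mem_center_iff.1 hg (φ h)]
    group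

lemma card_fix_cAct (g : G) (φ : H ≃* G) :
    Nat.card (MulAction.fixedPoints (fullTwistedDiagonal (cAct g φ)) U) =
      Nat.card (MulAction.fixedPoints (fullTwistedDiagonal φ) U) := by
  apply Nat.card_congr
  have mem1 : ∀ x : MulAction.fixedPoints (fullTwistedDiagonal φ) U,
      ((g, (1 : H)) : G × H) • (x : U) ∈
        MulAction.fixedPoints (fullTwistedDiagonal (cAct g φ)) U := by
    intro x
    rw [mem_fix_ftd]
    intro h
    rw [← mul_smul, show ((cAct g φ h, h) : G × H) * ((g, (1 : H)) : G × H) =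
      ((g, (1 : H)) : G × H) * ((φ h, h) : G × H) by
        simp [cAct_apply, Prod.ext_iff, mul_assoc], mul_smul, mem_fix_ftd.1 x.2 h]
  have mem2 : ∀ y : MulAction.fixedPoints (fullTwistedDiagonal (cAct g φ)) U,
      ((g⁻¹, (1 : H)) : G × H) • (y : U) ∈
        MulAction.fixedPoints (fullTwistedDiagonal φ) U := by
    intro y
    rw [mem_fix_ftd]
    intro h
    rw [← mul_smul, show ((φ h, h) : G × H) * ((g⁻¹, (1 : H)) : G × H) =
      ((g⁻¹, (1 : H)) : G × H) * ((cAct g φ h, h) : G × H) by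
        simp [cAct_apply, Prod.ext_iff, mul_assoc], mul_smul, mem_fix_ftd.1 y.2 h]
  refine ⟨fun y => ⟨((g⁻¹, (1 : H)) : G × H) • (y : U), mem2 y⟩,
    fun x => ⟨((g, (1 : H)) : G × H) • (x : U), mem1 x⟩, fun y => Subtype.ext ?_,
    fun x => Subtype.ext ?_⟩
  · show ((g, (1 : H)) : G × H) • ((g⁻¹, (1 : H)) : G × H) • (y : U) = (y : U)
    rw [← mul_smul]
    simp [Prod.mk_one_one]
  · show ((g⁻¹, (1 : H)) : G × H) • ((g, (1 : H)) : G × H) • (x : U) = (x : U)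
    rw [← mul_smul]
    simp [Prod.mk_one_one]

end DvdConj

instance BisetTensor.instFinite {G H K X Y : Type*} [Group G] [Group H] [Group K]
    [MulAction (G × H) X] [MulAction (H × K) Y] [Finite X] [Finite Y] :
    Finite (BisetTensor G H K X Y) :=
  inferInstanceAs (Finite (Quotient (bisetSetoid G H K X Y)))

lemma chain_lemma {G H : Type*} [Group G] [Group H] [Finite G] [Finite H]
    {U V : Type*} [MulAction (G × H) U] [MulAction (G × H) V] [Finite U] [Finite V]
    (hGH : Nat.card G = Nat.card H) (hU : IsBifree G H U) (hV : IsBifree G H V) :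
    Nat.card (MulAction.fixedPoints (diagSubgroup (⊤ : Subgroup G))
      (BisetTensor G H G U (BisetOp H G V))) * Nat.card H =
    Nat.card (Σ φ : H ≃* G, (MulAction.fixedPoints (fullTwistedDiagonal φ) U ×
      MulAction.fixedPoints (fullTwistedDiagonal φ) V)) := by
  rw [← card_pset hU.2, card_pset_eq_sum hGH hU hV]

/-- for an orthogonal pair `(X,Y)` of finite bifree `(G,H)`-bisets there is an
isomorphism `φ : H ≃* G` whose full twisted diagonal separates the marks of `X` and `Y`, and
`φ` is unique up to composition with inner automorphisms of `G`. -/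
theorem statement12 {G H : Type*} [Group G] [Group H] [Finite G] [Finite H]
    (X Y : Type*) [MulAction (G × H) X] [MulAction (G × H) Y] [Finite X] [Finite Y]
    (hX : IsBifree G H X) (hY : IsBifree G H Y) (horth : IsOrthogonalPair G H X Y) :
    ∃ φ : H ≃* G,
      (Nat.card (MulAction.fixedPoints (fullTwistedDiagonal φ) X) ≠
        Nat.card (MulAction.fixedPoints (fullTwistedDiagonal φ) Y)) ∧
      ∀ ψ : H ≃* G,
        Nat.card (MulAction.fixedPoints (fullTwistedDiagonal ψ) X) ≠
          Nat.card (MulAction.fixedPoints (fullTwistedDiagonal ψ) Y) →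
        ∃ g : G, ∀ h : H, ψ h = g * φ h * g⁻¹ := by
  classical
  haveI : Finite (H ≃* G) := Finite.of_injective (fun φ => (φ : H → G)) DFunLike.coe_injective
  haveI : Fintype (H ≃* G) := Fintype.ofFinite _
  haveI : Fintype G := Fintype.ofFinite _
  obtain ⟨horthE⟩ : Nonempty (IsoAsGSets (G × G)
    (BisetTensor G H G X (BisetOp H G X) ⊕ BisetTensor G H G Y (BisetOp H G Y))
    (BisetGrp G ⊕ (BisetTensor G H G X (BisetOp H G Y) ⊕ BisetTensor G H G Y (BisetOp H G X))))
    := ⟨horth⟩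
  -- Step 1 : |G| = |H|
  have hGH : Nat.card G = Nat.card H := by
    obtain ⟨e, -⟩ := horthE
    have hcards : Nat.card X * Nat.card X + Nat.card Y * Nat.card Y
        = Nat.card G * Nat.card H + (Nat.card X * Nat.card Y + Nat.card Y * Nat.card X) := by
      have h0 := Nat.card_congr e
      rw [Nat.card_sum, Nat.card_sum, Nat.card_sum, card_bisetGrp] at h0
      have e1 := card_tensor (U := X) (V := X) hX.2
      have e2 := card_tensor (U := Y) (V := Y) hY.2
      have e3 := card_tensor (U := X) (V := Y) hX.2
      have e4 := card_tensor (U := Y) (V := X) hY.2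
      calc Nat.card X * Nat.card X + Nat.card Y * Nat.card Y
          = (Nat.card (BisetTensor G H G X (BisetOp H G X))
              + Nat.card (BisetTensor G H G Y (BisetOp H G Y))) * Nat.card H := by
            rw [add_mul, ← e1, ← e2]
        _ = (Nat.card (BisetGrp G) + (Nat.card (BisetTensor G H G X (BisetOp H G Y))
              + Nat.card (BisetTensor G H G Y (BisetOp H G X)))) * Nat.card H := by
            rw [card_bisetGrp, h0]
        _ = Nat.card G * Nat.card H + (Nat.card X * Nat.card Y + Nat.card Y * Nat.card X) := by
            rw [card_bisetGrp, add_mul, add_mul, ← e3, ← e4]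
    have hDsq : ((Nat.card X : ℤ) - Nat.card Y)^2 = (Nat.card G : ℤ) * Nat.card H := by
      have := congrArg (fun n : ℕ => (n : ℤ)) hcards
      push_cast at this
      nlinarith [this]
    have hGdvd : (Nat.card G : ℤ) ∣ ((Nat.card X : ℤ) - Nat.card Y) :=
      dvd_sub (Int.natCast_dvd_natCast.2 (card_G_dvd hX.1))
        (Int.natCast_dvd_natCast.2 (card_G_dvd hY.1))
    have hHdvd : (Nat.card H : ℤ) ∣ ((Nat.card X : ℤ) - Nat.card Y) :=
      dvd_sub (Int.natCast_dvd_natCast.2 (card_H_dvd hX.2))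
        (Int.natCast_dvd_natCast.2 (card_H_dvd hY.2))
    have hnG0 : (0 : ℤ) < Nat.card G := by
      exact_mod_cast Nat.card_pos (α := G)
    have hnH0 : (0 : ℤ) < Nat.card H := by
      exact_mod_cast Nat.card_pos (α := H)
    have h1 : (Nat.card G : ℤ) ∣ Nat.card H := by
      obtain ⟨k, hk⟩ := hGdvd
      refine ⟨k * k, ?_⟩
      have : (Nat.card G : ℤ) * ((Nat.card G : ℤ) * (k * k)) = (Nat.card G : ℤ) * Nat.card H := by
        rw [← hDsq, hk]; ring
      exact (mul_left_cancel₀ (by positivity) this).symm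
    have h2 : (Nat.card H : ℤ) ∣ Nat.card G := by
      obtain ⟨k, hk⟩ := hHdvd
      refine ⟨k * k, ?_⟩
      have : (Nat.card H : ℤ) * ((Nat.card H : ℤ) * (k * k)) = (Nat.card H : ℤ) * Nat.card G := by
        rw [mul_comm ((Nat.card H : ℤ)) (Nat.card G : ℤ), ← hDsq, hk]; ring
      exact (mul_left_cancel₀ (by positivity) this).symm
    exact Nat.dvd_antisymm (Int.natCast_dvd_natCast.1 h1) (Int.natCast_dvd_natCast.1 h2)
  -- Step 2 : the mark identity at the diagonal
  set nX : (H ≃* G) → ℕ :=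
    fun φ => Nat.card (MulAction.fixedPoints (fullTwistedDiagonal φ) X) with hnX
  set nY : (H ≃* G) → ℕ :=
    fun φ => Nat.card (MulAction.fixedPoints (fullTwistedDiagonal φ) Y) with hnY
  have hmark : ∑ φ : H ≃* G, (nX φ * nX φ) + ∑ φ : H ≃* G, (nY φ * nY φ)
      = Nat.card (Subgroup.center G) * Nat.card H + (∑ φ : H ≃* G, (nX φ * nY φ) + ∑ φ : H ≃* G, (nY φ * nX φ)) := by
    have hfix := card_fix_congr horthE (diagSubgroup (⊤ : Subgroup G))
    rw [card_fix_sum, card_fix_sum, card_fix_sum, card_fix_grp] at hfix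
    have cXX : Nat.card (MulAction.fixedPoints (diagSubgroup (⊤ : Subgroup G))
        (BisetTensor G H G X (BisetOp H G X))) * Nat.card H
        = ∑ φ : H ≃* G, nX φ * nX φ := by
      rw [chain_lemma hGH hX hX, my_card_sigma]
      exact Finset.sum_congr rfl fun φ _ => Nat.card_prod _ _
    have cYY : Nat.card (MulAction.fixedPoints (diagSubgroup (⊤ : Subgroup G))
        (BisetTensor G H G Y (BisetOp H G Y))) * Nat.card H
        = ∑ φ : H ≃* G, nY φ * nY φ := by
      rw [chain_lemma hGH hY hY, my_card_sigma]
      exact Finset.sum_congr rfl fun φ _ => Nat.card_prod _ _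
    have cXY : Nat.card (MulAction.fixedPoints (diagSubgroup (⊤ : Subgroup G))
        (BisetTensor G H G X (BisetOp H G Y))) * Nat.card H
        = ∑ φ : H ≃* G, nX φ * nY φ := by
      rw [chain_lemma hGH hX hY, my_card_sigma]
      exact Finset.sum_congr rfl fun φ _ => Nat.card_prod _ _
    have cYX : Nat.card (MulAction.fixedPoints (diagSubgroup (⊤ : Subgroup G))
        (BisetTensor G H G Y (BisetOp H G X))) * Nat.card H
        = ∑ φ : H ≃* G, nY φ * nX φ := by
      rw [chain_lemma hGH hY hX, my_card_sigma]
      exact Finset.sum_congr rfl fun φ _ => Nat.card_prod _ _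
    calc ∑ φ : H ≃* G, (nX φ * nX φ) + ∑ φ : H ≃* G, (nY φ * nY φ)
        = (Nat.card (MulAction.fixedPoints (diagSubgroup (⊤ : Subgroup G))
            (BisetTensor G H G X (BisetOp H G X)))
          + Nat.card (MulAction.fixedPoints (diagSubgroup (⊤ : Subgroup G))
            (BisetTensor G H G Y (BisetOp H G Y)))) * Nat.card H := by
          rw [add_mul, cXX, cYY]
      _ = (Nat.card (Subgroup.center G) + (Nat.card (MulAction.fixedPoints (diagSubgroup (⊤ : Subgroup G))
            (BisetTensor G H G X (BisetOp H G Y)))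
          + Nat.card (MulAction.fixedPoints (diagSubgroup (⊤ : Subgroup G))
            (BisetTensor G H G Y (BisetOp H G X))))) * Nat.card H := by rw [hfix]
      _ = Nat.card (Subgroup.center G) * Nat.card H + (∑ φ : H ≃* G, (nX φ * nY φ) + ∑ φ : H ≃* G, (nY φ * nX φ)) := by
          rw [add_mul, add_mul, cXY, cYX]
  -- the integer-valued difference of marks
  set d : (H ≃* G) → ℤ := fun φ => (nX φ : ℤ) - nY φ with hd
  have key : ∑ φ : H ≃* G, (d φ)^2 = (Nat.card (Subgroup.center G) : ℤ) * Nat.card H := by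
    have h1 : ((∑ φ : H ≃* G, (nX φ * nX φ) : ℕ) : ℤ)
        + ((∑ φ : H ≃* G, (nY φ * nY φ) : ℕ) : ℤ)
        = (Nat.card (Subgroup.center G) : ℤ) * Nat.card H + (((∑ φ : H ≃* G, (nX φ * nY φ) : ℕ) : ℤ)
          + ((∑ φ : H ≃* G, (nY φ * nX φ) : ℕ) : ℤ)) := by
      exact_mod_cast congrArg (fun n : ℕ => (n : ℤ)) hmark
    push_cast at h1
    have h2 : ∑ φ : H ≃* G, ((d φ)^2 + ((nX φ : ℤ) * nY φ + (nY φ : ℤ) * nX φ))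
        = ∑ φ : H ≃* G, ((nX φ : ℤ) * nX φ + (nY φ : ℤ) * nY φ) :=
      Finset.sum_congr rfl fun φ _ => by simp only [hd]; ring
    rw [Finset.sum_add_distrib, Finset.sum_add_distrib, Finset.sum_add_distrib] at h2
    linarith [h1, h2]
  have zdvd : ∀ φ : H ≃* G, (Nat.card (Subgroup.center G) : ℤ) ∣ d φ := fun φ =>
    dvd_sub (Int.natCast_dvd_natCast.2 (card_center_dvd_fix hX.1 φ))
      (Int.natCast_dvd_natCast.2 (card_center_dvd_fix hY.1 φ))
  have dinv : ∀ (g : G) (φ : H ≃* G), d (cAct g φ) = d φ := fun g φ => by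
    simp only [hd, hnX, hnY, card_fix_cAct]
  have hcZ0 : (0 : ℤ) < Nat.card (Subgroup.center G) := by exact_mod_cast Nat.card_pos (α := Subgroup.center G)
  have hnH0 : (0 : ℤ) < Nat.card H := by exact_mod_cast Nat.card_pos (α := H)
  -- existence
  have hex : ∃ φ : H ≃* G, nX φ ≠ nY φ := by
    by_contra hno
    push_neg at hno
    have : ∑ φ : H ≃* G, (d φ)^2 = 0 := by
      refine Finset.sum_eq_zero fun φ _ => ?_
      simp [hd, hno φ]
    rw [key] at this
    nlinarith
  obtain ⟨φ₀, hφ₀⟩ := hex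
  refine ⟨φ₀, hφ₀, fun ψ hψ => ?_⟩
  by_contra hc
  push_neg at hc
  -- orbit finsets
  set O : (H ≃* G) → Finset (H ≃* G) :=
    fun φ => Finset.image (fun g : G => cAct g φ) Finset.univ with hO
  have hOcard : ∀ φ : H ≃* G, Nat.card H ≤ Nat.card (Subgroup.center G) * (O φ).card := by
    intro φ
    have hfiber : ∀ b ∈ Finset.image (fun g : G => cAct g φ) Finset.univ,
        (Finset.filter (fun a => cAct a φ = b) Finset.univ).card ≤ Nat.card (Subgroup.center G) := by
      intro b hb
      obtain ⟨g₀, -, hg₀⟩ := Finset.mem_image.1 hb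
      have hcz : (Finset.filter (fun x => x ∈ Subgroup.center G) Finset.univ).card = Nat.card (Subgroup.center G) := by
        rw [Nat.card_eq_fintype_card, Fintype.card_subtype]
      rw [← hcz]
      refine Finset.card_le_card_of_injOn (fun a => g₀⁻¹ * a) ?_ ?_
      · intro a ha
        simp only [Finset.coe_filter, Set.mem_setOf_eq] at ha ⊢
        refine ⟨Finset.mem_univ _, ?_⟩
        rw [← cAct_eq_self_iff (g₀⁻¹ * a) φ, ← cAct_cAct]
        have ha2 : cAct a φ = b := ha.2
        rw [ha2, ← hg₀, cAct_cAct, inv_mul_cancel, cAct_one]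
      · intro a _ b _ hab
        exact mul_left_cancel hab
    have := Finset.card_le_mul_card_image (f := fun g : G => cAct g φ) Finset.univ (Nat.card (Subgroup.center G)) hfiber
    calc Nat.card H = Nat.card G := hGH.symm
      _ = Finset.univ.card := by rw [Nat.card_eq_fintype_card, Finset.card_univ]
      _ ≤ Nat.card (Subgroup.center G) * (O φ).card := this
  have hdisj : Disjoint (O φ₀) (O ψ) := by
    rw [Finset.disjoint_left]
    intro χ hχ1 hχ2
    obtain ⟨a, -, ha⟩ := Finset.mem_image.1 hχ1
    obtain ⟨b, -, hb⟩ := Finset.mem_image.1 hχ2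
    have hψeq : ψ = cAct (b⁻¹ * a) φ₀ := by
      rw [← cAct_cAct, ha, ← hb, cAct_cAct, inv_mul_cancel, cAct_one]
    obtain ⟨h, hh⟩ := hc (b⁻¹ * a)
    exact hh (by rw [hψeq, cAct_apply])
  have hconst : ∀ (φ χ : H ≃* G), χ ∈ O φ → d χ = d φ := by
    intro φ χ hχ
    obtain ⟨g, -, hg⟩ := Finset.mem_image.1 hχ
    rw [← hg, dinv]
  have hsum1 : ∀ φ : H ≃* G, ∑ χ ∈ O φ, (d χ)^2 = ((O φ).card : ℤ) * (d φ)^2 := by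
    intro φ
    rw [Finset.sum_congr rfl (fun χ hχ => by rw [hconst φ χ hχ]), Finset.sum_const,
      nsmul_eq_mul]
  have hdsq : ∀ φ : H ≃* G, nX φ ≠ nY φ → (Nat.card (Subgroup.center G) : ℤ)^2 ≤ (d φ)^2 := by
    intro φ hne
    have hd0 : d φ ≠ 0 := by
      simp only [hd, sub_ne_zero]
      exact_mod_cast hne
    have h1 : (Nat.card (Subgroup.center G) : ℤ) ≤ |d φ| := Int.le_of_dvd (abs_pos.2 hd0) ((dvd_abs _ _).2 (zdvd φ))
    calc (Nat.card (Subgroup.center G) : ℤ)^2 ≤ |d φ|^2 := by nlinarith [abs_nonneg (d φ), hcZ0]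
      _ = (d φ)^2 := sq_abs _
  have htot : ∑ χ ∈ O φ₀ ∪ O ψ, (d χ)^2 ≤ ∑ χ : H ≃* G, (d χ)^2 :=
    Finset.sum_le_sum_of_subset_of_nonneg (Finset.subset_univ _) (fun χ _ _ => sq_nonneg _)
  rw [Finset.sum_union hdisj, hsum1 φ₀, hsum1 ψ, key] at htot
  have hψd : (Nat.card (Subgroup.center G) : ℤ)^2 ≤ (d ψ)^2 := hdsq ψ hψ
  have hφd : (Nat.card (Subgroup.center G) : ℤ)^2 ≤ (d φ₀)^2 := hdsq φ₀ hφ₀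
  have hOφ : (Nat.card H : ℤ) ≤ (Nat.card (Subgroup.center G) : ℤ) * ((O φ₀).card : ℤ) := by exact_mod_cast hOcard φ₀
  have hOψ : (Nat.card H : ℤ) ≤ (Nat.card (Subgroup.center G) : ℤ) * ((O ψ).card : ℤ) := by exact_mod_cast hOcard ψ
  have ha0 : (0 : ℤ) ≤ ((O φ₀).card : ℤ) := Int.natCast_nonneg _
  have hb0 : (0 : ℤ) ≤ ((O ψ).card : ℤ) := Int.natCast_nonneg _
  nlinarith [htot, mul_nonneg ha0 (sub_nonneg.2 hφd), mul_nonneg hb0 (sub_nonneg.2 hψd),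
    mul_nonneg (sub_nonneg.2 hOφ) hcZ0.le, mul_nonneg (sub_nonneg.2 hOψ) hcZ0.le,
    mul_pos hcZ0 hnH0]
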